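/- For every N ≥ 1 and every x ∈ ℂ with |x| = 1, |Σ_{m=1}^N ε_m x^m| ≤ n(√n + 1)·N^{1/2} (the root-N property for the Fourier-matrix construction). -/

import Mathlib

open Polynomial Finset

/-- The vector of polynomials `(P_k^{(1)}, …, P_k^{(n)})` defined by
`P_0^{(j)}(x) = x` and `v_{k+1}(x) = A^{(n,k)}(x) v_k(x)`, where `A^{(n,k)}(x)` has
`(j,l)` entry `ω^{jl} x^{l·n^k}` with `ω = exp(2πi/n)` (indices `0`-based). -/
noncomputable def Fvec (n : ℕ) : ℕ → Fin n → Polynomial ℂ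
  | 0 => fun _ => Polynomial.X
  | k + 1 => fun j => ∑ l : Fin n,
      Polynomial.C (Complex.exp (2 * Real.pi * Complex.I / n) ^ ((j : ℕ) * (l : ℕ)))
        * Polynomial.X ^ ((l : ℕ) * n ^ k) * Fvec n k l

noncomputable def omg (n : ℕ) : ℂ := Complex.exp (2 * Real.pi * Complex.I / n)

lemma Fvec_succ (n k : ℕ) (j : Fin n) : Fvec n (k+1) j =
    ∑ l : Fin n, C (omg n ^ ((j:ℕ)*(l:ℕ))) * X ^ ((l:ℕ) * n^k) * Fvec n k l := rfl

lemma omg_prim {n : ℕ} (hn : 2 ≤ n) : IsPrimitiveRoot (omg n) n :=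
  Complex.isPrimitiveRoot_exp n (by omega)

lemma omg_abs {n : ℕ} (hn : 2 ≤ n) : ‖omg n‖ = 1 := by
  rw [omg, Complex.norm_exp]
  have h : (2 * (Real.pi:ℂ) * Complex.I / n).re = 0 := by
    simp [Complex.div_re]
  rw [h, Real.exp_zero]

lemma omg_conj {n : ℕ} (hn : 2 ≤ n) : (starRingEnd ℂ) (omg n) = (omg n)⁻¹ :=
  (Complex.inv_eq_conj (omg_abs hn)).symm

lemma coeff_term (a : ℂ) (e : ℕ) (p : Polynomial ℂ) (m : ℕ) :
    (C a * X^e * p).coeff m = if e ≤ m then a * p.coeff (m - e) else 0 := by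
  have : C a * X^e * p = C a * (p * X^e) := by ring
  rw [this, coeff_C_mul, coeff_mul_X_pow', mul_ite, mul_zero]

lemma Fvec_supp {n : ℕ} (hn : 2 ≤ n) :
    ∀ k (j : Fin n) (m : ℕ), m = 0 ∨ n ^ k < m → (Fvec n k j).coeff m = 0 := by
  intro k
  induction k with
  | zero =>
    intro j m hm
    have h1 : (1:ℕ) ≠ m := by have h0 : n^0 = 1 := pow_zero n; omega
    simp [Fvec, coeff_X, h1]
  | succ k ih =>
    intro j m hm
    rw [Fvec_succ, finset_sum_coeff]
    refine Finset.sum_eq_zero fun l _ => ?_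
    rw [coeff_term]
    split_ifs with h
    · rw [ih l (m - (l:ℕ) * n^k) ?_, mul_zero]
      have hl : (l:ℕ) ≤ n - 1 := by have := l.isLt; omega
      have hA : (l:ℕ) * n^k ≤ (n-1) * n^k := Nat.mul_le_mul_right _ hl
      have hB : (n-1) * n^k + n^k = n * n^k := by
        calc (n-1) * n^k + n^k = ((n-1)+1) * n^k := by ring
        _ = n * n^k := by congr 1; omega
      have hC : n^(k+1) = n * n^k := by rw [pow_succ]; ring
      omega
    · rfl

lemma coeff_succ {n : ℕ} (hn : 2 ≤ n) (k : ℕ) (j l : Fin n) {r : ℕ}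
    (hr1 : 1 ≤ r) (hr2 : r ≤ n^k) :
    (Fvec n (k+1) j).coeff ((l:ℕ) * n^k + r)
      = omg n ^ ((j:ℕ)*(l:ℕ)) * (Fvec n k l).coeff r := by
  rw [Fvec_succ, finset_sum_coeff]
  rw [Finset.sum_eq_single l]
  · rw [coeff_term, if_pos (by omega), Nat.add_sub_cancel_left]
  · intro l' _ hne
    rw [coeff_term]
    split_ifs with h
    · rw [Fvec_supp hn k l' _ ?_, mul_zero]
      have hnk : 0 < n^k := Nat.pow_pos (by omega)
      rcases lt_or_gt_of_ne (fun he : (l':ℕ) = (l:ℕ) => hne (Fin.ext he)) with hlt | hgt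
      · -- l' < l : remainder > n^k
        right
        have h2 : (l':ℕ) * n^k + n^k ≤ (l:ℕ) * n^k := by
          have h3 : ((l':ℕ)+1) * n^k ≤ (l:ℕ) * n^k := Nat.mul_le_mul_right _ (by omega)
          rw [add_one_mul] at h3; exact h3
        omega
      · -- l' > l : remainder = 0 or negative-truncated
        left
        have h2 : (l:ℕ) * n^k + n^k ≤ (l':ℕ) * n^k := by
          have h3 : ((l:ℕ)+1) * n^k ≤ (l':ℕ) * n^k := Nat.mul_le_mul_right _ (by omega)
          rw [add_one_mul] at h3; exact h3
        omega
    · rfl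
  · intro h; exact absurd (Finset.mem_univ l) h

lemma omg_conj_pow {n : ℕ} (hn : 2 ≤ n) (a : ℕ) :
    (starRingEnd ℂ) (omg n ^ a) = omg n ^ (-(a:ℤ)) := by
  rw [map_pow, omg_conj hn, inv_pow, zpow_neg, zpow_natCast]

lemma omg_ne_zero {n : ℕ} (hn : 2 ≤ n) : omg n ≠ 0 := Complex.exp_ne_zero _

lemma orth {n : ℕ} (hn : 2 ≤ n) (l l' : Fin n) :
    ∑ j : Fin n, omg n ^ ((j:ℕ)*(l:ℕ)) * (starRingEnd ℂ) (omg n ^ ((j:ℕ)*(l':ℕ)))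
      = if l = l' then (n:ℂ) else 0 := by
  have hne := omg_ne_zero hn
  have key : ∀ j : Fin n, omg n ^ ((j:ℕ)*(l:ℕ)) * (starRingEnd ℂ) (omg n ^ ((j:ℕ)*(l':ℕ)))
      = (omg n ^ ((l:ℤ) - (l':ℤ))) ^ (j:ℕ) := by
    intro j
    rw [omg_conj_pow hn, ← zpow_natCast (omg n), ← zpow_add₀ hne, ← zpow_natCast _ (j:ℕ),
      ← zpow_mul]
    congr 1
    push_cast
    ring
  simp only [key]
  rw [Fin.sum_univ_eq_sum_range (fun j => (omg n ^ ((l:ℤ) - (l':ℤ))) ^ j)]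
  split_ifs with h
  · subst h
    simp
  · have hd : ¬ ((n:ℤ) ∣ ((l:ℤ) - (l':ℤ))) := by
      intro hdvd
      have hl : ((l:ℕ):ℤ) < n := by exact_mod_cast l.isLt
      have hl' : ((l':ℕ):ℤ) < n := by exact_mod_cast l'.isLt
      have hl0 : (0:ℤ) ≤ ((l:ℕ):ℤ) := by positivity
      have hl0' : (0:ℤ) ≤ ((l':ℕ):ℤ) := by positivity
      have hn2 : (2:ℤ) ≤ n := by exact_mod_cast hn
      rcases hdvd with ⟨c, hc⟩
      have hc0 : c = 0 := by
        rcases lt_trichotomy c 0 with h1 | h1 | h1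
        · exfalso; nlinarith
        · exact h1
        · exfalso; nlinarith
      rw [hc0, mul_zero] at hc
      have : (l:ℕ) = (l':ℕ) := by omega
      exact h (Fin.ext this)
    have hz1 : omg n ^ ((l:ℤ) - (l':ℤ)) ≠ 1 := by
      intro he
      exact hd (((omg_prim hn).zpow_eq_one_iff_dvd _).mp he)
    have hzn : (omg n ^ ((l:ℤ) - (l':ℤ))) ^ n = 1 := by
      rw [← zpow_natCast, ← zpow_mul, mul_comm, zpow_mul, zpow_natCast,
        (omg_prim hn).pow_eq_one, one_zpow]
    rw [geom_sum_eq hz1, hzn, sub_self, zero_div]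

lemma parseval {n : ℕ} (hn : 2 ≤ n) (a : Fin n → ℂ) :
    ∑ j : Fin n, Complex.normSq (∑ l : Fin n, omg n ^ ((j:ℕ)*(l:ℕ)) * a l)
      = n * ∑ l : Fin n, Complex.normSq (a l) := by
  have key : (∑ j : Fin n, (Complex.normSq (∑ l : Fin n, omg n ^ ((j:ℕ)*(l:ℕ)) * a l) : ℂ))
      = (n : ℂ) * ∑ l : Fin n, (Complex.normSq (a l) : ℂ) := by
    simp only [← Complex.mul_conj]
    calc ∑ j : Fin n, (∑ l : Fin n, omg n ^ ((j:ℕ)*(l:ℕ)) * a l) *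
            (starRingEnd ℂ) (∑ l : Fin n, omg n ^ ((j:ℕ)*(l:ℕ)) * a l)
        = ∑ j : Fin n, ∑ l : Fin n, ∑ l' : Fin n,
            (omg n ^ ((j:ℕ)*(l:ℕ)) * (starRingEnd ℂ) (omg n ^ ((j:ℕ)*(l':ℕ))))
            * (a l * (starRingEnd ℂ) (a l')) := by
          refine Finset.sum_congr rfl fun j _ => ?_
          rw [map_sum, Finset.sum_mul_sum]
          refine Finset.sum_congr rfl fun l _ => Finset.sum_congr rfl fun l' _ => ?_
          rw [map_mul]; ring
      _ = ∑ l : Fin n, ∑ l' : Fin n, (∑ j : Fin n,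
            omg n ^ ((j:ℕ)*(l:ℕ)) * (starRingEnd ℂ) (omg n ^ ((j:ℕ)*(l':ℕ))))
            * (a l * (starRingEnd ℂ) (a l')) := by
          rw [Finset.sum_comm]
          refine Finset.sum_congr rfl fun l _ => ?_
          rw [Finset.sum_comm]
          refine Finset.sum_congr rfl fun l' _ => ?_
          rw [Finset.sum_mul]
      _ = ∑ l : Fin n, (n:ℂ) * (a l * (starRingEnd ℂ) (a l)) := by
          refine Finset.sum_congr rfl fun l _ => ?_
          rw [Finset.sum_eq_single l]
          · rw [orth hn, if_pos rfl]
          · intro l' _ hne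
            rw [orth hn, if_neg (fun h => hne h.symm), zero_mul]
          · intro h; exact absurd (Finset.mem_univ l) h
      _ = (n:ℂ) * ∑ l : Fin n, a l * (starRingEnd ℂ) (a l) := by rw [Finset.mul_sum]
  exact_mod_cast key

lemma Fvec_eval_succ {n : ℕ} (k : ℕ) (j : Fin n) (x : ℂ) :
    (Fvec n (k+1) j).eval x
      = ∑ l : Fin n, omg n ^ ((j:ℕ)*(l:ℕ)) * (x ^ ((l:ℕ) * n^k) * (Fvec n k l).eval x) := by
  rw [Fvec_succ, eval_finset_sum]
  refine Finset.sum_congr rfl fun l _ => ?_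
  rw [eval_mul, eval_mul, eval_C, eval_pow, eval_X, mul_assoc]

lemma sumSq {n : ℕ} (hn : 2 ≤ n) (k : ℕ) (x : ℂ) (hx : ‖x‖ = 1) :
    ∑ j : Fin n, Complex.normSq ((Fvec n k j).eval x) = (n:ℝ)^(k+1) := by
  induction k with
  | zero =>
    have hx2 : Complex.normSq x = 1 := by
      rw [← Complex.sq_norm, hx, one_pow]
    simp [Fvec, hx2]
  | succ k ih =>
    have hxp : ∀ e : ℕ, Complex.normSq (x ^ e) = 1 := by
      intro e
      rw [← Complex.sq_norm, norm_pow, hx, one_pow, one_pow]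
    calc ∑ j : Fin n, Complex.normSq ((Fvec n (k+1) j).eval x)
        = ∑ j : Fin n, Complex.normSq (∑ l : Fin n,
            omg n ^ ((j:ℕ)*(l:ℕ)) * (x ^ ((l:ℕ) * n^k) * (Fvec n k l).eval x)) := by
          refine Finset.sum_congr rfl fun j _ => ?_
          rw [Fvec_eval_succ]
      _ = (n:ℝ) * ∑ l : Fin n, Complex.normSq (x ^ ((l:ℕ) * n^k) * (Fvec n k l).eval x) :=
          parseval hn _
      _ = (n:ℝ) * ∑ l : Fin n, Complex.normSq ((Fvec n k l).eval x) := by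
          congr 1
          refine Finset.sum_congr rfl fun l _ => ?_
          rw [Complex.normSq_mul, hxp, one_mul]
      _ = (n:ℝ)^(k+1+1) := by rw [ih]; ring

lemma eval_bound {n : ℕ} (hn : 2 ≤ n) (k : ℕ) (j : Fin n) (x : ℂ) (hx : ‖x‖ = 1) :
    ‖(Fvec n k j).eval x‖ ≤ Real.sqrt ((n:ℝ)^(k+1)) := by
  have h1 : Complex.normSq ((Fvec n k j).eval x) ≤ (n:ℝ)^(k+1) := by
    rw [← sumSq hn k x hx]
    exact Finset.single_le_sum (f := fun j => Complex.normSq ((Fvec n k j).eval x))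
      (fun i _ => Complex.normSq_nonneg _) (Finset.mem_univ j)
  rw [Complex.norm_def]
  exact Real.sqrt_le_sqrt h1

lemma sum_eq_eval {n : ℕ} (hn : 2 ≤ n) (k : ℕ) (j : Fin n) (x : ℂ) :
    ∑ m ∈ Ioc 0 (n^k), (Fvec n k j).coeff m * x^m = (Fvec n k j).eval x := by
  have hdeg : (Fvec n k j).natDegree < n^k + 1 := by
    have : (Fvec n k j).natDegree ≤ n^k := natDegree_le_iff_coeff_eq_zero.mpr
      (fun m hm => Fvec_supp hn k j m (Or.inr hm))
    omega
  rw [eval_eq_sum_range' hdeg]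
  have hset : Finset.range (n^k + 1) = insert 0 (Ioc 0 (n^k)) := by
    ext m; simp
  rw [hset, Finset.sum_insert (by simp)]
  rw [Fvec_supp hn k j 0 (Or.inl rfl)]
  simp

lemma block {n : ℕ} (hn : 2 ≤ n) (k : ℕ) (j l : Fin n) {t : ℕ} (ht : t ≤ n^k) (x : ℂ) :
    ∑ m ∈ Ioc ((l:ℕ)*n^k) ((l:ℕ)*n^k + t), (Fvec n (k+1) j).coeff m * x^m
      = omg n ^ ((j:ℕ)*(l:ℕ)) * x^((l:ℕ)*n^k)
        * ∑ m ∈ Ioc 0 t, (Fvec n k l).coeff m * x^m := by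
  have hmap : Ioc ((l:ℕ)*n^k) ((l:ℕ)*n^k + t)
      = (Ioc 0 t).map (addLeftEmbedding ((l:ℕ)*n^k)) := by
    rw [Finset.map_add_left_Ioc, add_zero]
  rw [hmap, Finset.sum_map, Finset.mul_sum]
  refine Finset.sum_congr rfl fun m hm => ?_
  simp only [addLeftEmbedding_apply]
  rw [Finset.mem_Ioc] at hm
  rw [coeff_succ hn k j l hm.1 (le_trans hm.2 ht), pow_add]
  ring

lemma abs_omg_pow {n : ℕ} (hn : 2 ≤ n) (a : ℕ) : ‖omg n ^ a‖ = 1 := by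
  rw [norm_pow, omg_abs hn, one_pow]

lemma prefix_bound {n : ℕ} (hn : 2 ≤ n) (k : ℕ) (j : Fin n) (x : ℂ)
    (hx : ‖x‖ = 1) :
    ∀ q, q ≤ n → ‖∑ m ∈ Ioc 0 (q * n^k), (Fvec n (k+1) j).coeff m * x^m‖
      ≤ q * Real.sqrt ((n:ℝ)^(k+1)) := by
  intro q
  induction q with
  | zero => simp
  | succ q ihq =>
    intro hq
    have hql : q < n := by omega
    have hsplit := Finset.sum_Ioc_consecutive (fun m => (Fvec n (k+1) j).coeff m * x^m)
      (Nat.zero_le (q * n^k)) (Nat.mul_le_mul_right _ (by omega : q ≤ q + 1))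
    have hblk : ∑ m ∈ Ioc (q * n^k) ((q+1) * n^k), (Fvec n (k+1) j).coeff m * x^m
        = omg n ^ ((j:ℕ)*q) * x^(q*n^k) * (Fvec n k ⟨q, hql⟩).eval x := by
      have h1 : (q+1) * n^k = ((⟨q, hql⟩ : Fin n) : ℕ) * n^k + n^k := by
        simp; ring
      have h2 : q * n^k = ((⟨q, hql⟩ : Fin n) : ℕ) * n^k := by simp
      rw [h1, h2, block hn k j ⟨q, hql⟩ (le_refl (n^k)) x,
        sum_eq_eval hn k ⟨q, hql⟩ x]
    rw [← hsplit, hblk]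
    have hb : ‖omg n ^ ((j:ℕ)*q) * x^(q*n^k) * (Fvec n k ⟨q, hql⟩).eval x‖
        ≤ Real.sqrt ((n:ℝ)^(k+1)) := by
      rw [norm_mul, norm_mul, abs_omg_pow hn, norm_pow, hx, one_pow, one_mul, one_mul]
      exact eval_bound hn k _ x hx
    calc ‖_ + _‖ ≤ _ + _ := norm_add_le _ _
      _ ≤ q * Real.sqrt ((n:ℝ)^(k+1)) + Real.sqrt ((n:ℝ)^(k+1)) :=
          add_le_add (ihq (by omega)) hb
      _ = (q+1 : ℕ) * Real.sqrt ((n:ℝ)^(k+1)) := by push_cast; ring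

lemma main_bound {n : ℕ} (hn : 2 ≤ n) :
    ∀ k (j : Fin n) (N : ℕ), N ≤ n^k → ∀ x : ℂ, ‖x‖ = 1 →
      ‖∑ m ∈ Ioc 0 N, (Fvec n k j).coeff m * x^m‖
        ≤ ((n:ℝ) + Real.sqrt n) * Real.sqrt ((n:ℝ)^k) := by
  have hs0 : (0:ℝ) ≤ Real.sqrt n := Real.sqrt_nonneg _
  have hn0 : (0:ℝ) ≤ n := by positivity
  intro k
  induction k with
  | zero =>
    intro j N hN x hx
    rw [pow_zero] at hN
    interval_cases N
    · simp only [Ioc_self, Finset.sum_empty, norm_zero]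
      positivity
    · have : ∑ m ∈ Ioc 0 1, (Fvec n 0 j).coeff m * x^m = x := by
        simp [Fvec, coeff_X]
      rw [this, hx]
      rw [pow_zero, Real.sqrt_one, mul_one]
      have h2 : (2:ℝ) ≤ n := by exact_mod_cast hn
      linarith
  | succ k ih =>
    intro j N hN x hx
    rcases Nat.eq_zero_or_pos N with rfl | hN1
    · simp only [Ioc_self, Finset.sum_empty, norm_zero]
      positivity
    set q := (N-1) / n^k with hqdef
    have hnk : 0 < n^k := Nat.pow_pos (by omega)
    have hq1 : q * n^k ≤ N - 1 := Nat.div_mul_le_self _ _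
    have hq2 : N - 1 < q * n^k + n^k := Nat.lt_div_mul_add hnk
    have hql : q < n := by
      by_contra hcon
      push_neg at hcon
      have : n * n^k ≤ q * n^k := Nat.mul_le_mul_right _ hcon
      have hpow : n^(k+1) = n * n^k := by rw [pow_succ]; ring
      omega
    set r := N - q * n^k with hrdef
    have hr1 : 1 ≤ r := by omega
    have hr2 : r ≤ n^k := by omega
    have hNeq : N = q * n^k + r := by omega
    have hsplit := Finset.sum_Ioc_consecutive (fun m => (Fvec n (k+1) j).coeff m * x^m)
      (Nat.zero_le (q * n^k)) (by omega : q * n^k ≤ N)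
    have hblk : ∑ m ∈ Ioc (q * n^k) N, (Fvec n (k+1) j).coeff m * x^m
        = omg n ^ ((j:ℕ)*q) * x^(q*n^k)
          * ∑ m ∈ Ioc 0 r, (Fvec n k ⟨q, hql⟩).coeff m * x^m := by
      have h1 : N = ((⟨q, hql⟩ : Fin n) : ℕ) * n^k + r := by simpa using hNeq
      have h2 : q * n^k = ((⟨q, hql⟩ : Fin n) : ℕ) * n^k := by simp
      rw [h2]
      rw [show Ioc (((⟨q, hql⟩ : Fin n) : ℕ) * n^k) N
          = Ioc (((⟨q, hql⟩ : Fin n) : ℕ) * n^k) (((⟨q, hql⟩ : Fin n) : ℕ) * n^k + r) by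
        rw [← h1]]
      exact block hn k j ⟨q, hql⟩ hr2 x
    have hpre : ‖∑ m ∈ Ioc 0 (q * n^k), (Fvec n (k+1) j).coeff m * x^m‖
        ≤ q * Real.sqrt ((n:ℝ)^(k+1)) := prefix_bound hn k j x hx q (by omega)
    have hrec : ‖omg n ^ ((j:ℕ)*q) * x^(q*n^k)
          * ∑ m ∈ Ioc 0 r, (Fvec n k ⟨q, hql⟩).coeff m * x^m‖
        ≤ ((n:ℝ) + Real.sqrt n) * Real.sqrt ((n:ℝ)^k) := by
      rw [norm_mul, norm_mul, abs_omg_pow hn, norm_pow, hx, one_pow, one_mul, one_mul]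
      exact ih ⟨q, hql⟩ r hr2 x hx
    have htri : ‖∑ m ∈ Ioc 0 N, (Fvec n (k+1) j).coeff m * x^m‖
        ≤ q * Real.sqrt ((n:ℝ)^(k+1)) + ((n:ℝ) + Real.sqrt n) * Real.sqrt ((n:ℝ)^k) := by
      rw [← hsplit, hblk]
      exact le_trans (norm_add_le _ _) (add_le_add hpre hrec)
    refine le_trans htri ?_
    have hsq : Real.sqrt ((n:ℝ)^(k+1)) = Real.sqrt n * Real.sqrt ((n:ℝ)^k) := by
      rw [pow_succ, mul_comm, Real.sqrt_mul (by positivity)]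
    have hqR : (q:ℝ) ≤ (n:ℝ) - 1 := by
      have : (q:ℝ) + 1 ≤ n := by exact_mod_cast hql
      linarith
    have hs2 : Real.sqrt n ^ 2 = n := Real.sq_sqrt hn0
    have hsk : (0:ℝ) ≤ Real.sqrt ((n:ℝ)^k) := Real.sqrt_nonneg _
    rw [hsq]
    nlinarith [mul_nonneg hs0 hsk, sq_nonneg (Real.sqrt n)]

/-- The root-N property for the Fourier-matrix construction: the sequence `ε` of
coefficients of the `P_k^{(1)}` (well defined, as `ε m` is the coefficient of `x^m`
in `P_k^{(1)}` for any `k` with `m ≤ n^k`) satisfies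
`|∑_{m=1}^N ε_m x^m| ≤ n(√n + 1)·√N` for all `|x| = 1`. -/
theorem stmt19 (n : ℕ) (hn : 2 ≤ n) (ε : ℕ → ℂ)
    (hε : ∀ m k : ℕ, 1 ≤ m → m ≤ n ^ k → ε m = (Fvec n k ⟨0, by omega⟩).coeff m) :
    ∀ N : ℕ, 1 ≤ N → ∀ x : ℂ, ‖x‖ = 1 →
      ‖∑ m ∈ Finset.Icc 1 N, ε m * x ^ m‖
        ≤ (n : ℝ) * (Real.sqrt n + 1) * Real.sqrt N := by
  intro N hN x hx
  set k := Nat.clog n N with hk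
  have hNk : N ≤ n ^ k := Nat.le_pow_clog (by omega) N
  have hkN : n ^ k ≤ n * N := by
    rcases eq_or_lt_of_le hN with h1 | h1
    · rw [hk, ← h1, Nat.clog_one_right, pow_zero]
      omega
    · have hlt : n ^ (k - 1) < N := Nat.pow_pred_clog_lt_self (by omega) h1
      have hk1 : 1 ≤ k := by
        rw [hk]
        exact Nat.clog_pos (by omega) h1
      have : n ^ k = n * n ^ (k - 1) := by
        rw [← pow_succ']
        congr 1
        omega
      rw [this]
      exact Nat.mul_le_mul_left _ (by omega)
  have hsum : ∑ m ∈ Finset.Icc 1 N, ε m * x ^ m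
      = ∑ m ∈ Ioc 0 N, (Fvec n k ⟨0, by omega⟩).coeff m * x ^ m := by
    rw [← Finset.Icc_add_one_left_eq_Ioc]
    refine Finset.sum_congr rfl fun m hm => ?_
    rw [Finset.mem_Icc] at hm
    rw [hε m k hm.1 (le_trans hm.2 hNk)]
  rw [hsum]
  refine le_trans (main_bound hn k ⟨0, by omega⟩ N hNk x hx) ?_
  have hs0 : (0:ℝ) ≤ Real.sqrt n := Real.sqrt_nonneg _
  have hn0 : (0:ℝ) ≤ n := by positivity
  have h1 : Real.sqrt ((n:ℝ)^k) ≤ Real.sqrt ((n:ℝ) * N) := by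
    apply Real.sqrt_le_sqrt
    exact_mod_cast hkN
  have h2 : Real.sqrt ((n:ℝ) * N) = Real.sqrt n * Real.sqrt N := Real.sqrt_mul hn0 _
  have hs2 : Real.sqrt n ^ 2 = n := Real.sq_sqrt hn0
  have hsN : (0:ℝ) ≤ Real.sqrt N := Real.sqrt_nonneg _
  calc ((n:ℝ) + Real.sqrt n) * Real.sqrt ((n:ℝ)^k)
      ≤ ((n:ℝ) + Real.sqrt n) * (Real.sqrt n * Real.sqrt N) := by
        rw [← h2]
        exact mul_le_mul_of_nonneg_left h1 (by positivity)
    _ = (n : ℝ) * (Real.sqrt n + 1) * Real.sqrt N := by nlinarith [hs2, hsN, hs0]
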